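/- Let A be an associative unital algebra over ℂ and let a, b ∈ A satisfy a·b − b·a = b². Then for every complex number x and every natural number p, one has (a + x·b)^p = a^p + ∑_{j=1}^{p} γ_j(x)·C(p,j) · b^j·a^{p−j}, where γ_j(x) := x·(x+1)·⋯·(x+j−1) ∈ ℂ and C(p,j) is the binomial coefficient; here the complex coefficient acts by scalar multiplication. -/

import Mathlib

open Finset

theorem stmt_9 {A : Type*} [Ring A] [Algebra ℂ A] (a b : A)
    (h : a * b - b * a = b ^ 2) (x : ℂ) (p : ℕ) :
    (a + x • b) ^ p = a ^ p + ∑ j ∈ Finset.Icc 1 p,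
      ((∏ i ∈ Finset.range j, (x + i)) * (p.choose j : ℂ)) • (b ^ j * a ^ (p - j)) := by
  have hab : a * b = b * a + b ^ 2 := by
    have := sub_eq_iff_eq_add.mp h
    rw [this, add_comm]
  have hcomm : ∀ j : ℕ, a * b ^ j = b ^ j * a + (j : ℂ) • b ^ (j + 1) := by
    intro j
    induction j with
    | zero => simp
    | succ j ih =>
      have e : a * b ^ (j + 1) = (a * b ^ j) * b := by rw [mul_assoc, ← pow_succ]
      rw [e, ih, add_mul, mul_assoc, hab, mul_add, ← mul_assoc (b ^ j) b a, ← pow_succ b j,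
        smul_mul_assoc, ← pow_succ b (j + 1), pow_two, ← mul_assoc (b ^ j) b b, ← pow_succ b j,
        ← pow_succ b (j + 1)]
      push_cast
      rw [add_smul, one_smul]
      abel
  set f : ℕ → ℕ → ℂ := fun p j => (∏ i ∈ Finset.range j, (x + i)) * (p.choose j : ℂ) with hf
  have hmain : ∀ q : ℕ, (a + x • b) ^ q =
      ∑ j ∈ range (q + 1), f q j • (b ^ j * a ^ (q - j)) := by
    intro q
    induction q with
    | zero => simp [hf]
    | succ q ih =>
      rw [pow_succ', ih, Finset.mul_sum]
      have step : ∀ j : ℕ, (a + x • b) * (f q j • (b ^ j * a ^ (q - j)))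
          = f q j • (b ^ j * a ^ (q - j + 1))
            + (((j : ℂ) + x) * f q j) • (b ^ (j + 1) * a ^ (q - j)) := by
        intro j
        have h1 : a * (b ^ j * a ^ (q - j))
            = b ^ j * a ^ (q - j + 1) + (j : ℂ) • (b ^ (j + 1) * a ^ (q - j)) := by
          rw [← mul_assoc, hcomm j, add_mul, smul_mul_assoc, mul_assoc, ← pow_succ']
        have h2 : b * (b ^ j * a ^ (q - j)) = b ^ (j + 1) * a ^ (q - j) := by
          rw [← mul_assoc, ← pow_succ']
        rw [add_mul, mul_smul_comm, smul_mul_assoc, mul_smul_comm, h1, h2, smul_add,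
          smul_smul, smul_smul]
        module
      simp only [step]
      rw [Finset.sum_add_distrib]
      have e1 : ∑ j ∈ range (q + 1), f q j • (b ^ j * a ^ (q - j + 1))
          = ∑ j ∈ range (q + 1), f q j • (b ^ j * a ^ (q + 1 - j)) := by
        apply Finset.sum_congr rfl
        intro j hj
        rw [Finset.mem_range] at hj
        rw [Nat.sub_add_comm (Nat.lt_succ_iff.mp hj)]
      rw [e1]
      have e2 : ∑ j ∈ range (q + 1), f q j • (b ^ j * a ^ (q + 1 - j))
          = ∑ j ∈ range (q + 2), f q j • (b ^ j * a ^ (q + 1 - j)) := by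
        rw [Finset.sum_range_succ (n := q + 1)]
        simp [hf, Nat.choose_succ_self]
      rw [e2, Finset.sum_range_succ' (fun j => f q j • (b ^ j * a ^ (q + 1 - j))) (q + 1)]
      have e3 : ∑ j ∈ range (q + 1), (((j : ℂ) + x) * f q j) • (b ^ (j + 1) * a ^ (q - j))
          = ∑ j ∈ range (q + 1),
              (((j : ℂ) + x) * f q j) • (b ^ (j + 1) * a ^ (q + 1 - (j + 1))) := by
        simp
      rw [e3]
      rw [Finset.sum_range_succ' (fun j => f (q + 1) j • (b ^ j * a ^ (q + 1 - j))) (q + 1)]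
      have e0 : f (q + 1) 0 = f q 0 := by simp [hf]
      rw [e0]
      have key : (∑ j ∈ range (q + 1), f q (j + 1) • (b ^ (j + 1) * a ^ (q + 1 - (j + 1))))
            + ∑ j ∈ range (q + 1),
                (((j : ℂ) + x) * f q j) • (b ^ (j + 1) * a ^ (q + 1 - (j + 1)))
          = ∑ j ∈ range (q + 1), f (q + 1) (j + 1) • (b ^ (j + 1) * a ^ (q + 1 - (j + 1))) := by
        rw [← Finset.sum_add_distrib]
        apply Finset.sum_congr rfl
        intro j hj
        rw [← add_smul]
        congr 1
        simp only [hf]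
        rw [Nat.choose_succ_succ, Finset.prod_range_succ]
        push_cast
        ring
      rw [← key]
      abel
  rw [hmain p, Finset.sum_range_succ' (fun j => f p j • (b ^ j * a ^ (p - j))) p]
  have h0 : f p 0 • (b ^ 0 * a ^ (p - 0)) = a ^ p := by simp [hf]
  rw [h0, add_comm]
  congr 1
  rw [show Finset.Icc 1 p = Finset.Ico 1 (p + 1) by rfl, Finset.sum_Ico_eq_sum_range]
  simp [add_comm 1, hf]
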